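/- Fix an integer g ≥ 2 and an odd prime ℓ. Let G be a subgroup of the group GSp_{2g}(F_ℓ) of symplectic similitudes (invertible 2g×2g matrices A over F_ℓ with Aᵀ·J·A = γ·J for some γ ∈ F_ℓ^×), acting naturally on V = F_ℓ^{2g}. Suppose (a) G contains a transvection, i.e., an element A with det(A) = 1 whose fixed subspace {v ∈ V : A·v = v} has dimension 2g − 1; (b) the action of G on V is irreducible, i.e., the only G-stable subspaces of V are 0 and V; and (c) the action of G on V is primitive, i.e., there is no integer r ≥ 2 and nonzero subspaces W_1, …, W_r of V with V = W_1 ⊕ ⋯ ⊕ W_r such that every element of G permutes the set {W_1, …, W_r}. Then G contains the symplectic group Sp_{2g}(F_ℓ) = {A : Aᵀ·J·A = J}. -/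

import Mathlib

open Matrix

/-- The standard symplectic matrix `[[0, I], [-I, 0]]`. -/
def Jmat (g : ℕ) (R : Type) [CommRing R] : Matrix (Fin g ⊕ Fin g) (Fin g ⊕ Fin g) R :=
  Matrix.fromBlocks 0 1 (-1) 0

namespace SpAux

variable {g : ℕ} {R : Type} [CommRing R]

theorem Jmat_transpose : (Jmat g R)ᵀ = - Jmat g R := by
  simp [Jmat, fromBlocks_transpose, fromBlocks_neg]

theorem Jmat_mul_Jmat : Jmat g R * Jmat g R = -1 := by
  rw [Jmat, fromBlocks_multiply, ← fromBlocks_one, fromBlocks_neg]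
  simp

/-- the symplectic pairing -/
def B (u v : Fin g ⊕ Fin g → R) : R := u ⬝ᵥ (Jmat g R).mulVec v

theorem B_add_left (u v w : Fin g ⊕ Fin g → R) : B (u + v) w = B u w + B v w := by
  simp [B, add_dotProduct]

theorem B_add_right (u v w : Fin g ⊕ Fin g → R) : B u (v + w) = B u v + B u w := by
  simp [B, mulVec_add, dotProduct_add]

theorem B_smul_left (a : R) (u w : Fin g ⊕ Fin g → R) : B (a • u) w = a * B u w := by
  simp [B, smul_dotProduct, smul_eq_mul]

theorem B_smul_right (a : R) (u w : Fin g ⊕ Fin g → R) : B u (a • w) = a * B u w := by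
  simp [B, mulVec_smul, dotProduct_smul, smul_eq_mul]

theorem B_neg (u v : Fin g ⊕ Fin g → R) : B u v = - B v u := by
  have : B u v = (Jmat g R)ᵀ.mulVec u ⬝ᵥ v := by
    simp [B, dotProduct_mulVec, vecMul_transpose, dotProduct_comm]
  rw [this, Jmat_transpose]
  simp [B, dotProduct_comm, neg_mulVec, neg_dotProduct, dotProduct_neg]

theorem Jmat_mulVec (v : Fin g ⊕ Fin g → R) :
    (Jmat g R).mulVec v = Sum.elim (fun a => v (Sum.inr a)) (fun a => - v (Sum.inl a)) := by
  ext x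
  cases x <;>
    simp [Jmat, mulVec, dotProduct, Fintype.sum_sum_type, fromBlocks, one_apply]

theorem B_apply (u v : Fin g ⊕ Fin g → R) :
    B u v = (∑ a, u (Sum.inl a) * v (Sum.inr a)) - ∑ a, u (Sum.inr a) * v (Sum.inl a) := by
  simp [B, Jmat_mulVec, dotProduct, Fintype.sum_sum_type, Finset.sum_sub_distrib, mul_comm,
    sub_eq_add_neg, Finset.sum_neg_distrib]

theorem B_self (u : Fin g ⊕ Fin g → R) : B u u = 0 := by
  rw [B_apply]
  simp [mul_comm]

theorem B_single_inl (u : Fin g ⊕ Fin g → R) (a : Fin g) :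
    B u (Pi.single (Sum.inl a) 1) = - u (Sum.inr a) := by
  rw [B_apply]
  simp [Pi.single_apply]

theorem B_single_inr (u : Fin g ⊕ Fin g → R) (a : Fin g) :
    B u (Pi.single (Sum.inr a) 1) = u (Sum.inl a) := by
  rw [B_apply]
  simp [Pi.single_apply]

theorem exists_B_ne_zero {u : Fin g ⊕ Fin g → R} (hu : u ≠ 0) : ∃ v, B u v ≠ 0 := by
  by_contra h
  push_neg at h
  apply hu
  funext x
  cases x with
  | inl a =>
    have := h (Pi.single (Sum.inr a) 1)
    rw [B_single_inr] at this
    simpa using this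
  | inr a =>
    have := h (Pi.single (Sum.inl a) 1)
    rw [B_single_inl] at this
    simpa [neg_eq_zero] using this

theorem vecMulVec_mulVec (a b x : Fin g ⊕ Fin g → R) :
    (vecMulVec a b).mulVec x = (b ⬝ᵥ x) • a := by
  ext i
  simp [vecMulVec, mulVec, dotProduct, Finset.mul_sum, Finset.sum_mul, add_mul, mul_add,
    mul_assoc, mul_comm, mul_left_comm]

theorem mul_vecMulVec (M : Matrix (Fin g ⊕ Fin g) (Fin g ⊕ Fin g) R)
    (a b : Fin g ⊕ Fin g → R) : M * vecMulVec a b = vecMulVec (M.mulVec a) b := by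
  ext i j
  simp [vecMulVec, mul_apply, mulVec, dotProduct, Finset.sum_mul, Finset.mul_sum, add_mul,
    mul_add, mul_assoc, mul_comm, mul_left_comm]

theorem vecMulVec_mul (M : Matrix (Fin g ⊕ Fin g) (Fin g ⊕ Fin g) R)
    (a b : Fin g ⊕ Fin g → R) : vecMulVec a b * M = vecMulVec a (M.vecMul b) := by
  ext i j
  simp [vecMulVec, mul_apply, vecMul, dotProduct, Finset.mul_sum, Finset.sum_mul, add_mul,
    mul_add, mul_assoc, mul_comm, mul_left_comm]

theorem vecMulVec_mul_vecMulVec (a b c d : Fin g ⊕ Fin g → R) :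
    vecMulVec a b * vecMulVec c d = (b ⬝ᵥ c) • vecMulVec a d := by
  ext i j
  simp [vecMulVec, mul_apply, dotProduct, Finset.sum_mul, Finset.mul_sum, add_mul, mul_add,
    mul_assoc, mul_comm, mul_left_comm]

theorem vecMulVec_transpose (a b : Fin g ⊕ Fin g → R) :
    (vecMulVec a b)ᵀ = vecMulVec b a := by
  ext i j
  simp [vecMulVec, mul_comm]

/-- the symplectic transvection with direction `v` and parameter `c` -/
def Tmat (v : Fin g ⊕ Fin g → R) (c : R) : Matrix (Fin g ⊕ Fin g) (Fin g ⊕ Fin g) R :=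
  1 + c • vecMulVec v ((Jmat g R).mulVec v)

theorem Tmat_mulVec (v : Fin g ⊕ Fin g → R) (c : R) (x : Fin g ⊕ Fin g → R) :
    (Tmat v c).mulVec x = x + (c * B x v) • v := by
  rw [Tmat, add_mulVec, one_mulVec, smul_mulVec, vecMulVec_mulVec, B,
    dotProduct_comm]
  rw [smul_smul]

theorem Tmat_zero (v : Fin g ⊕ Fin g → R) : Tmat v 0 = 1 := by
  simp [Tmat]

theorem Tmat_mul_Tmat (v : Fin g ⊕ Fin g → R) (c d : R) :
    Tmat v c * Tmat v d = Tmat v (c + d) := by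
  have h0 : ((Jmat g R).mulVec v) ⬝ᵥ v = 0 := by
    rw [dotProduct_comm]; exact B_self v
  simp only [Tmat, add_mul, mul_add, one_mul, mul_one, Matrix.mul_smul, Matrix.smul_mul,
    vecMulVec_mul_vecMulVec, h0, zero_smul, smul_zero, add_assoc, add_smul]
  abel

theorem Tmat_smul (a : R) (v : Fin g ⊕ Fin g → R) (c : R) :
    Tmat (a • v) c = Tmat v (c * (a * a)) := by
  simp only [Tmat, mulVec_smul]
  congr 1
  ext i j
  simp [vecMulVec, mul_assoc, mul_comm, mul_left_comm, smul_smul]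

theorem Tmat_sp (v : Fin g ⊕ Fin g → R) (c : R) :
    (Tmat v c)ᵀ * Jmat g R * Tmat v c = Jmat g R := by
  have h0 : ((Jmat g R).mulVec v) ⬝ᵥ v = 0 := by
    rw [dotProduct_comm]; exact B_self v
  set w := (Jmat g R).mulVec v with hw
  have hwv : w ⬝ᵥ v = 0 := by
    rw [dotProduct_comm]; exact B_self v
  have hvJ : vecMul v (Jmat g R) = - w := by
    rw [← mulVec_transpose, Jmat_transpose, neg_mulVec, hw]
  have hJN : Jmat g R * vecMulVec v w = vecMulVec w w := by
    rw [mul_vecMulVec]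
  have hNJ : vecMulVec w v * Jmat g R = - vecMulVec w w := by
    rw [vecMulVec_mul, hvJ]
    ext i j
    simp [vecMulVec]
  have hNJN : (vecMulVec w v * Jmat g R) * vecMulVec v w = 0 := by
    rw [hNJ, neg_mul, vecMulVec_mul_vecMulVec, hwv, zero_smul, neg_zero]
  simp only [Tmat, transpose_add, transpose_one, transpose_smul, vecMulVec_transpose,
    add_mul, mul_add, one_mul, mul_one, Matrix.smul_mul, Matrix.mul_smul, hJN, hNJ, hNJN,
    smul_zero, smul_neg, add_zero]
  have h2 : vecMulVec w w * vecMulVec v (Jmat g R *ᵥ v) = 0 := by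
    rw [← hw, vecMulVec_mul_vecMulVec, hwv, zero_smul]
  rw [← hw, hNJN, hNJ, hJN]
  simp only [smul_zero, add_zero, smul_neg]; abel

/-- the symplectic transvection as a unit -/
def Tunit (v : Fin g ⊕ Fin g → R) (c : R) : (Matrix (Fin g ⊕ Fin g) (Fin g ⊕ Fin g) R)ˣ where
  val := Tmat v c
  inv := Tmat v (-c)
  val_inv := by rw [Tmat_mul_Tmat]; simp [Tmat_zero]
  inv_val := by rw [Tmat_mul_Tmat]; simp [Tmat_zero]

@[simp] theorem Tunit_val (v : Fin g ⊕ Fin g → R) (c : R) : (Tunit v c : Matrix _ _ R) = Tmat v c := rfl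

theorem Tunit_mul (v : Fin g ⊕ Fin g → R) (c d : R) :
    Tunit v c * Tunit v d = Tunit v (c + d) := by
  ext
  simp [Tmat_mul_Tmat]

theorem Tunit_pow (v : Fin g ⊕ Fin g → R) (c : R) (k : ℕ) :
    (Tunit v c) ^ k = Tunit v (k * c) := by
  induction k with
  | zero => ext; simp [Tmat_zero]
  | succ n ih =>
    rw [pow_succ, ih, Tunit_mul]
    congr 1
    push_cast
    ring

section Field

variable {K : Type} [Field K]

theorem B_map {M : Matrix (Fin g ⊕ Fin g) (Fin g ⊕ Fin g) K} {γ : K}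
    (hM : Mᵀ * Jmat g K * M = γ • Jmat g K) (u v : Fin g ⊕ Fin g → K) :
    B (M *ᵥ u) (M *ᵥ v) = γ * B u v := by
  have h1 : B (M *ᵥ u) (M *ᵥ v) = u ᵥ* (Mᵀ * Jmat g K * M) ⬝ᵥ v := by
    rw [B, mulVec_mulVec, dotProduct_mulVec, ← vecMul_transpose, vecMul_vecMul,
      ← Matrix.mul_assoc]
  have h2 : u ᵥ* (γ • Jmat g K) = γ • (u ᵥ* Jmat g K) := by
    rw [← mulVec_transpose, transpose_smul, smul_mulVec, mulVec_transpose]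
  rw [h1, hM, h2, smul_dotProduct, B, dotProduct_mulVec, smul_eq_mul]

theorem conj_Tmat {M : (Matrix (Fin g ⊕ Fin g) (Fin g ⊕ Fin g) K)ˣ} {γ : K} (hγ : γ ≠ 0)
    (hM : (M : Matrix (Fin g ⊕ Fin g) (Fin g ⊕ Fin g) K)ᵀ * Jmat g K * M = γ • Jmat g K)
    (v : Fin g ⊕ Fin g → K) (c : K) :
    (M : Matrix (Fin g ⊕ Fin g) (Fin g ⊕ Fin g) K) * Tmat v c *
        ((M⁻¹ : (Matrix (Fin g ⊕ Fin g) (Fin g ⊕ Fin g) K)ˣ) : Matrix (Fin g ⊕ Fin g) (Fin g ⊕ Fin g) K) =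
      Tmat ((M : Matrix (Fin g ⊕ Fin g) (Fin g ⊕ Fin g) K) *ᵥ v) (γ⁻¹ * c) := by
  have key : (M : Matrix (Fin g ⊕ Fin g) (Fin g ⊕ Fin g) K) * Tmat v c =
      Tmat ((M : Matrix (Fin g ⊕ Fin g) (Fin g ⊕ Fin g) K) *ᵥ v) (γ⁻¹ * c) * M := by
    set Mm := (M : Matrix (Fin g ⊕ Fin g) (Fin g ⊕ Fin g) K)
    have h1 : Mm * Tmat v c = Mm + c • vecMulVec (Mm *ᵥ v) ((Jmat g K) *ᵥ v) := by
      rw [Tmat, mul_add, mul_one, Matrix.mul_smul, mul_vecMulVec]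
    have h2 : ((Jmat g K) *ᵥ (Mm *ᵥ v)) ᵥ* Mm = γ • ((Jmat g K) *ᵥ v) := by
      rw [← mulVec_transpose, mulVec_mulVec, mulVec_mulVec, hM, smul_mulVec]
    have h3 : Tmat (Mm *ᵥ v) (γ⁻¹ * c) * Mm =
        Mm + (γ⁻¹ * c) • (γ • vecMulVec (Mm *ᵥ v) ((Jmat g K) *ᵥ v)) := by
      rw [Tmat, add_mul, one_mul, Matrix.smul_mul, vecMulVec_mul, h2]
      congr 2
      ext i j
      simp [vecMulVec]
      ring
    rw [h1, h3, smul_smul]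
    congr 1
    rw [mul_comm γ⁻¹ c, mul_assoc, inv_mul_cancel₀ hγ, mul_one]
  rw [key, Matrix.mul_assoc, Units.mul_inv, Matrix.mul_one]

theorem mulVec_ne_zero {M : (Matrix (Fin g ⊕ Fin g) (Fin g ⊕ Fin g) K)ˣ}
    {v : Fin g ⊕ Fin g → K} (hv : v ≠ 0) :
    (M : Matrix (Fin g ⊕ Fin g) (Fin g ⊕ Fin g) K) *ᵥ v ≠ 0 := by
  intro h
  apply hv
  have h2 : (↑(M⁻¹ * M) : Matrix (Fin g ⊕ Fin g) (Fin g ⊕ Fin g) K) *ᵥ v = 0 := by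
    rw [Units.val_mul, ← mulVec_mulVec, h, mulVec_zero]
  rw [inv_mul_cancel, Units.val_one, one_mulVec] at h2
  exact h2

end Field

section G

variable {g ℓ : ℕ} [Fact ℓ.Prime]

local notation "K" => ZMod ℓ
local notation "V" => (Fin g ⊕ Fin g → ZMod ℓ)
local notation "GL" => (Matrix (Fin g ⊕ Fin g) (Fin g ⊕ Fin g) (ZMod ℓ))ˣ

variable (G : Subgroup (Matrix (Fin g ⊕ Fin g) (Fin g ⊕ Fin g) (ZMod ℓ))ˣ)

/-- directions of transvections contained in `G` -/
def Rset : Set (Fin g ⊕ Fin g → ZMod ℓ) :=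
  {v | v ≠ 0 ∧ ∃ c : ZMod ℓ, c ≠ 0 ∧ Tunit v c ∈ G}

variable {G}

theorem Rset_param {v : Fin g ⊕ Fin g → ZMod ℓ} (hv : v ∈ Rset G) {c : K} (hc : c ≠ 0) :
    Tunit v c ∈ G := by
  obtain ⟨-, c₀, hc₀, hmem⟩ := hv
  have h := pow_mem hmem (c * c₀⁻¹).val
  rw [Tunit_pow] at h
  rwa [ZMod.natCast_val, ZMod.cast_id, mul_assoc, inv_mul_cancel₀ hc₀, mul_one] at h

theorem Rset_smul {v : Fin g ⊕ Fin g → ZMod ℓ} (hv : v ∈ Rset G) {a : K} (ha : a ≠ 0) :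
    a • v ∈ Rset G := by
  refine ⟨smul_ne_zero ha hv.1, (a * a)⁻¹, by simp [ha], ?_⟩
  have : Tunit (a • v) (a * a)⁻¹ = Tunit v ((a * a)⁻¹ * (a * a)) := by
    ext; simp [Tmat_smul]
  rw [this, inv_mul_cancel₀ (by simp [ha] : (a*a) ≠ 0)]
  exact Rset_param hv one_ne_zero

theorem Rset_conj (hGSp : ∀ A ∈ G, ∃ γ : ZMod ℓ, γ ≠ 0 ∧
      (A : Matrix (Fin g ⊕ Fin g) (Fin g ⊕ Fin g) (ZMod ℓ))ᵀ * Jmat g (ZMod ℓ) * A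
        = γ • Jmat g (ZMod ℓ))
    {v : Fin g ⊕ Fin g → ZMod ℓ} (hv : v ∈ Rset G) {M : GL} (hM : M ∈ G) :
    (M : Matrix (Fin g ⊕ Fin g) (Fin g ⊕ Fin g) (ZMod ℓ)) *ᵥ v ∈ Rset G := by
  obtain ⟨γ, hγ, hsp⟩ := hGSp M hM
  refine ⟨mulVec_ne_zero hv.1, γ⁻¹ * 1, by simp [hγ], ?_⟩
  have : Tunit ((M : Matrix (Fin g ⊕ Fin g) (Fin g ⊕ Fin g) (ZMod ℓ)) *ᵥ v) (γ⁻¹ * 1)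
      = M * Tunit v 1 * M⁻¹ := by
    apply Units.ext
    rw [Units.val_mul, Units.val_mul, Tunit_val, Tunit_val, conj_Tmat hγ hsp v 1]
  rw [this]
  exact mul_mem (mul_mem hM (Rset_param hv one_ne_zero)) (inv_mem hM)

theorem Rset_plane (hGSp : ∀ A ∈ G, ∃ γ : ZMod ℓ, γ ≠ 0 ∧
      (A : Matrix (Fin g ⊕ Fin g) (Fin g ⊕ Fin g) (ZMod ℓ))ᵀ * Jmat g (ZMod ℓ) * A
        = γ • Jmat g (ZMod ℓ))
    {u v : Fin g ⊕ Fin g → ZMod ℓ} (hu : u ∈ Rset G) (hv : v ∈ Rset G)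
    (huv : B u v ≠ 0) (a b : K) (hab : a • u + b • v ≠ 0) :
    a • u + b • v ∈ Rset G := by
  rcases eq_or_ne a 0 with rfl | ha
  · have hb : b ≠ 0 := by
      rintro rfl; simp at hab
    simpa using Rset_smul hv hb
  · have step : u + (b / a) • v ∈ Rset G := by
      rcases eq_or_ne b 0 with rfl | hb
      · simpa using hu
      · have hc : (b/a) / B u v ≠ 0 := div_ne_zero (div_ne_zero hb ha) huv
        have h2 := Rset_conj hGSp hu (Rset_param hv hc)
        rw [Tunit_val, Tmat_mulVec, mul_comm] at h2
        have hcoef : B u v * (b / a / B u v) = b / a := by field_simp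
        rwa [hcoef] at h2
    have h3 := Rset_smul step ha
    rw [smul_add, smul_smul] at h3
    rwa [mul_comm a, div_mul_cancel₀ _ ha] at h3

theorem matrix_eq_of_mulVec_eq {M N : Matrix (Fin g ⊕ Fin g) (Fin g ⊕ Fin g) (ZMod ℓ)}
    (h : ∀ x, M *ᵥ x = N *ᵥ x) : M = N := by
  ext i j
  have := congrFun (h (Pi.single j 1)) i
  simpa [Matrix.mulVec_single] using this

/-- the linear functional `B x ·` -/
def Bfunc (x : Fin g ⊕ Fin g → ZMod ℓ) : (Fin g ⊕ Fin g → ZMod ℓ) →ₗ[ZMod ℓ] ZMod ℓ where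
  toFun y := B x y
  map_add' := B_add_right x
  map_smul' a y := by simp [B_smul_right]

theorem B_eq_zero_right {y : Fin g ⊕ Fin g → ZMod ℓ} (h : ∀ x, B x y = 0) : y = 0 := by
  by_contra hy
  obtain ⟨x, hx⟩ := exists_B_ne_zero hy
  exact hx (by rw [B_neg, h x, neg_zero])

theorem finrank_V : Module.finrank (ZMod ℓ) (Fin g ⊕ Fin g → ZMod ℓ) = 2 * g := by
  simp [Module.finrank_pi]
  ring

theorem finrank_ker_Bfunc (x : Fin g ⊕ Fin g → ZMod ℓ) :
    2 * g - 1 ≤ Module.finrank (ZMod ℓ) (LinearMap.ker (Bfunc (g := g) x)) := by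
  have h := LinearMap.finrank_range_add_finrank_ker (Bfunc (g := g) x)
  rw [finrank_V] at h
  have h2 : Module.finrank (ZMod ℓ) (LinearMap.range (Bfunc (g := g) x)) ≤ 1 := by
    simpa using (LinearMap.range (Bfunc (g := g) x)).finrank_le
  omega

theorem Rset_nonempty (hg : 2 ≤ g)
    (hGSp : ∀ A ∈ G, ∃ γ : ZMod ℓ, γ ≠ 0 ∧
      (A : Matrix (Fin g ⊕ Fin g) (Fin g ⊕ Fin g) (ZMod ℓ))ᵀ * Jmat g (ZMod ℓ) * A
        = γ • Jmat g (ZMod ℓ))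
    {A : GL} (hA : A ∈ G)
    (hker : Module.finrank (ZMod ℓ)
        (LinearMap.ker (Matrix.toLin'
          ((A : Matrix (Fin g ⊕ Fin g) (Fin g ⊕ Fin g) (ZMod ℓ)) - 1))) = 2 * g - 1) :
    (Rset G).Nonempty := by
  set Am := (A : Matrix (Fin g ⊕ Fin g) (Fin g ⊕ Fin g) (ZMod ℓ)) with hAm
  set f := Matrix.toLin' (Am - 1) with hf
  -- the range of `f` is one-dimensional, spanned by `v`
  have hrange : Module.finrank (ZMod ℓ) (LinearMap.range f) = 1 := by
    have h := LinearMap.finrank_range_add_finrank_ker f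
    rw [hker, finrank_V] at h
    omega
  have hrne : LinearMap.range f ≠ ⊥ := by
    intro h
    rw [h] at hrange
    simp at hrange
  obtain ⟨v, hvr, hv0⟩ := Submodule.exists_mem_ne_zero_of_ne_bot hrne
  have hspan : LinearMap.range f = Submodule.span (ZMod ℓ) {v} := by
    refine (Submodule.eq_of_le_of_finrank_le ?_ ?_).symm
    · rwa [Submodule.span_le, Set.singleton_subset_iff]
    · rw [hrange, finrank_span_singleton hv0]
  obtain ⟨i₀, hi₀⟩ : ∃ i₀, v i₀ ≠ 0 := by
    by_contra h
    push_neg at h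
    exact hv0 (funext h)
  set φ : (Fin g ⊕ Fin g → ZMod ℓ) → ZMod ℓ := fun x => f x i₀ / v i₀ with hφdef
  have hφ : ∀ x, f x = φ x • v := by
    intro x
    have hx : f x ∈ Submodule.span (ZMod ℓ) {v} := hspan ▸ LinearMap.mem_range_self f x
    obtain ⟨c, hc⟩ := Submodule.mem_span_singleton.mp hx
    rw [← hc, hφdef]
    simp only [← hc, Pi.smul_apply, smul_eq_mul]
    rw [mul_div_assoc, div_self hi₀, mul_one]
  have hAv : ∀ x, Am *ᵥ x = x + φ x • v := by
    intro x
    have h1 : f x = Am *ᵥ x - x := by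
      rw [hf, Matrix.toLin'_apply, sub_mulVec, one_mulVec]
    rw [← hφ x, h1]
    abel
  -- some vector is moved
  obtain ⟨x₀, hx₀⟩ : ∃ x₀, φ x₀ ≠ 0 := by
    by_contra h
    push_neg at h
    have : ∀ x, f x = 0 := fun x => by rw [hφ x, h x, zero_smul]
    have hk : LinearMap.ker f = ⊤ := by
      ext x; simp [LinearMap.mem_ker, this x]
    rw [hk, finrank_top, finrank_V] at hker
    omega
  obtain ⟨γ, hγ, hsp⟩ := hGSp A hA
  have key : ∀ x y, γ * B x y = B x y + φ y * B x v + φ x * B v y := by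
    intro x y
    have h1 := B_map hsp x y
    rw [hAv x, hAv y] at h1
    rw [B_add_left, B_add_right, B_add_right, B_smul_left, B_smul_right, B_smul_left,
      B_smul_right, B_self] at h1
    rw [← h1]
    ring
  -- the multiplier of a transvection is 1
  have hγ1 : γ = 1 := by
    by_contra hne
    have hWle : 2 * g - 1 ≤ Module.finrank (ZMod ℓ)
        (LinearMap.ker (Bfunc (g := g) x₀)) := finrank_ker_Bfunc x₀
    have hsup : Module.finrank (ZMod ℓ)
        ↥(LinearMap.ker f ⊔ LinearMap.ker (Bfunc (g := g) x₀)) ≤ 2 * g := by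
      rw [← finrank_V (g := g) (ℓ := ℓ)]
      exact Submodule.finrank_le _
    have heq := Submodule.finrank_sup_add_finrank_inf_eq
      (LinearMap.ker f) (LinearMap.ker (Bfunc (g := g) x₀))
    rw [hker] at heq
    have hpos : 0 < Module.finrank (ZMod ℓ)
        ↥(LinearMap.ker f ⊓ LinearMap.ker (Bfunc (g := g) x₀)) := by omega
    have hnebot : LinearMap.ker f ⊓ LinearMap.ker (Bfunc (g := g) x₀) ≠ ⊥ := by
      intro hbot
      rw [hbot, finrank_bot] at hpos
      omega
    obtain ⟨y, hy, hy0⟩ := Submodule.exists_mem_ne_zero_of_ne_bot hnebot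
    obtain ⟨hyU, hyW⟩ := Submodule.mem_inf.mp hy
    have hφy : φ y = 0 := by
      have h1 : f y = 0 := LinearMap.mem_ker.mp hyU
      rw [hφ y] at h1
      rcases smul_eq_zero.mp h1 with h | h
      · exact h
      · exact absurd h hv0
    have hBxy : B x₀ y = 0 := hyW
    have hBvy : B v y = 0 := by
      have h := key x₀ y
      rw [hφy, hBxy] at h
      simp only [mul_zero, zero_mul, add_zero, zero_add] at h
      exact (mul_eq_zero.mp h.symm).resolve_left hx₀
    have : ∀ x, B x y = 0 := by
      intro x
      have h := key x y
      rw [hφy, hBvy] at h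
      have h2 : (γ - 1) * B x y = 0 := by linear_combination h
      exact (mul_eq_zero.mp h2).resolve_left (sub_ne_zero.mpr hne)
    exact hy0 (B_eq_zero_right this)
  have hkey2 : ∀ x y, φ y * B x v + φ x * B v y = 0 := by
    intro x y
    have h := key x y
    rw [hγ1, one_mul] at h
    linear_combination -h
  rcases eq_or_ne (B v x₀) 0 with hb0 | hb0
  · exfalso
    apply hv0
    apply B_eq_zero_right
    intro x
    have h := hkey2 x x₀
    rw [hb0, mul_zero, add_zero] at h
    exact (mul_eq_zero.mp h).resolve_left hx₀
  · refine ⟨v, hv0, -(φ x₀) / B v x₀, div_ne_zero (neg_ne_zero.mpr hx₀) hb0, ?_⟩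
    have hval : Tmat v (-(φ x₀) / B v x₀) = Am := by
      apply matrix_eq_of_mulVec_eq
      intro x
      rw [Tmat_mulVec, hAv x]
      congr 2
      have h := hkey2 x x₀
      field_simp
      linear_combination -h
    have : Tunit v (-(φ x₀) / B v x₀) = A := Units.ext hval
    rw [this]
    exact hA

theorem span_Rset (hGSp : ∀ A ∈ G, ∃ γ : ZMod ℓ, γ ≠ 0 ∧
      (A : Matrix (Fin g ⊕ Fin g) (Fin g ⊕ Fin g) (ZMod ℓ))ᵀ * Jmat g (ZMod ℓ) * A
        = γ • Jmat g (ZMod ℓ))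
    (hirr : ∀ W : Submodule (ZMod ℓ) (Fin g ⊕ Fin g → ZMod ℓ),
      (∀ A ∈ G, ∀ v ∈ W, (A : Matrix (Fin g ⊕ Fin g) (Fin g ⊕ Fin g) (ZMod ℓ)).mulVec v ∈ W) →
      W = ⊥ ∨ W = ⊤)
    (hne : (Rset G).Nonempty) :
    Submodule.span (ZMod ℓ) (Rset G) = ⊤ := by
  have hstab : ∀ A ∈ G, ∀ v ∈ Submodule.span (ZMod ℓ) (Rset G),
      (A : Matrix (Fin g ⊕ Fin g) (Fin g ⊕ Fin g) (ZMod ℓ)).mulVec v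
        ∈ Submodule.span (ZMod ℓ) (Rset G) := by
    intro A hA v hv
    have : (A : Matrix (Fin g ⊕ Fin g) (Fin g ⊕ Fin g) (ZMod ℓ)).mulVec v
        = (Matrix.mulVecLin (A : Matrix (Fin g ⊕ Fin g) (Fin g ⊕ Fin g) (ZMod ℓ))) v := rfl
    rw [this]
    have hmap : Submodule.map
        (Matrix.mulVecLin (A : Matrix (Fin g ⊕ Fin g) (Fin g ⊕ Fin g) (ZMod ℓ)))
        (Submodule.span (ZMod ℓ) (Rset G)) ≤ Submodule.span (ZMod ℓ) (Rset G) := by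
      rw [Submodule.map_span, Submodule.span_le]
      rintro x ⟨w, hw, rfl⟩
      exact Submodule.subset_span (Rset_conj hGSp hw hA)
    exact hmap ⟨v, hv, rfl⟩
  rcases hirr _ hstab with h | h
  · exfalso
    obtain ⟨v, hv⟩ := hne
    have : v ∈ (⊥ : Submodule (ZMod ℓ) (Fin g ⊕ Fin g → ZMod ℓ)) :=
      h ▸ Submodule.subset_span hv
    exact hv.1 (by simpa using this)
  · exact h

/-- every nonzero vector supports a nonzero `B`-pairing with some element of a spanning set -/
theorem exists_pair_ne_zero {s : Set (Fin g ⊕ Fin g → ZMod ℓ)}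
    (hs : Submodule.span (ZMod ℓ) s = ⊤) {x : Fin g ⊕ Fin g → ZMod ℓ} (hx : x ≠ 0) :
    ∃ w ∈ s, B x w ≠ 0 := by
  by_contra h
  push_neg at h
  have hle : Submodule.span (ZMod ℓ) s ≤ LinearMap.ker (Bfunc (g := g) x) := by
    rw [Submodule.span_le]
    intro w hw
    exact h w hw
  rw [hs] at hle
  obtain ⟨w, hw⟩ := exists_B_ne_zero hx
  exact hw (hle (Submodule.mem_top))

/-- adjacency of transvection directions -/
def Adj (G : Subgroup (Matrix (Fin g ⊕ Fin g) (Fin g ⊕ Fin g) (ZMod ℓ))ˣ)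
    (u v : Fin g ⊕ Fin g → ZMod ℓ) : Prop :=
  u ∈ Rset G ∧ v ∈ Rset G ∧ B u v ≠ 0

/-- connectedness in the graph of transvection directions -/
def Reach (G : Subgroup (Matrix (Fin g ⊕ Fin g) (Fin g ⊕ Fin g) (ZMod ℓ))ˣ) :=
  Relation.ReflTransGen (Adj G)

theorem B_ne_symm {u v : Fin g ⊕ Fin g → ZMod ℓ} (h : B u v ≠ 0) : B v u ≠ 0 := by
  rw [B_neg]
  simpa using h

theorem exists_ne_ne (hl3 : 3 ≤ ℓ) (a b : ZMod ℓ) : ∃ s : ZMod ℓ, s ≠ a ∧ s ≠ b := by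
  by_contra h
  push_neg at h
  have hsub : (Finset.univ : Finset (ZMod ℓ)) ⊆ {a, b} := by
    intro s _
    by_cases hsa : s = a
    · simp [hsa]
    · simp [h s hsa]
  have hcard := Finset.card_le_card hsub
  have h2 : ({a, b} : Finset (ZMod ℓ)).card ≤ 2 :=
    le_trans (Finset.card_insert_le _ _) (by simp)
  haveI : NeZero ℓ := ⟨by omega⟩
  rw [Finset.card_univ, ZMod.card] at hcard
  omega

theorem B_neg_left (u v : Fin g ⊕ Fin g → ZMod ℓ) : B (-u) v = -B u v := by
  have := B_smul_left (-1 : ZMod ℓ) u v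
  simpa using this

theorem B_neg_right (u v : Fin g ⊕ Fin g → ZMod ℓ) : B u (-v) = -B u v := by
  have := B_smul_right (-1 : ZMod ℓ) u v
  simpa using this

theorem add_mem_of_good_z
    (hGSp : ∀ A ∈ G, ∃ γ : ZMod ℓ, γ ≠ 0 ∧
      (A : Matrix (Fin g ⊕ Fin g) (Fin g ⊕ Fin g) (ZMod ℓ))ᵀ * Jmat g (ZMod ℓ) * A
        = γ • Jmat g (ZMod ℓ))
    (h2 : (2 : ZMod ℓ) ≠ 0)
    {u v z : Fin g ⊕ Fin g → ZMod ℓ} (hu : u ∈ Rset G) (hv : v ∈ Rset G) (hz : z ∈ Rset G)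
    (huv : B u v = 0) (huz : B u z ≠ 0) (hvz : B v z ≠ 0)
    (hsum : B u z + B v z ≠ 0) (hne : u + v ≠ 0) : u + v ∈ Rset G := by
  have hpz : B (u + v) z = B u z + B v z := B_add_left u v z
  -- w₁ = u + v + z
  have hu'ne : (1 : ZMod ℓ) • u + (1 : ZMod ℓ) • z ≠ 0 := by
    intro h
    apply huz
    have he : u = -z := by linear_combination (norm := module) h
    rw [he, B_neg_left, B_self, neg_zero]
  have hu' : u + z ∈ Rset G := by
    have := Rset_plane hGSp hu hz huz 1 1 hu'ne
    simpa using this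
  have hu'v : B (u + z) v ≠ 0 := by
    rw [B_add_left, huv, zero_add]
    exact B_ne_symm hvz
  have hw1ne : (1 : ZMod ℓ) • (u + z) + (1 : ZMod ℓ) • v ≠ 0 := by
    intro h
    apply hsum
    have he : u + v = -z := by linear_combination (norm := module) h
    rw [← hpz, he, B_neg_left, B_self, neg_zero]
  have hw1 : (u + v) + z ∈ Rset G := by
    have := Rset_plane hGSp hu' hv hu'v 1 1 hw1ne
    have he : (1 : ZMod ℓ) • (u + z) + (1 : ZMod ℓ) • v = (u + v) + z := by module
    rwa [he] at this
  -- w₂ = u + v - z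
  have hu''ne : (1 : ZMod ℓ) • u + (-1 : ZMod ℓ) • z ≠ 0 := by
    intro h
    apply huz
    have he : u = z := by linear_combination (norm := module) h
    rw [he, B_self]
  have hu'' : u - z ∈ Rset G := by
    have := Rset_plane hGSp hu hz huz 1 (-1) hu''ne
    have he : (1 : ZMod ℓ) • u + (-1 : ZMod ℓ) • z = u - z := by module
    rwa [he] at this
  have hu''v : B (u - z) v ≠ 0 := by
    rw [sub_eq_add_neg, B_add_left, huv, zero_add, B_neg_left]
    intro h
    apply hvz
    rw [B_neg]
    simpa [neg_eq_zero] using h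
  have hw2ne : (1 : ZMod ℓ) • (u - z) + (1 : ZMod ℓ) • v ≠ 0 := by
    intro h
    apply hsum
    have he : u + v = z := by linear_combination (norm := module) h
    rw [← hpz, he, B_self]
  have hw2 : (u + v) - z ∈ Rset G := by
    have := Rset_plane hGSp hu'' hv hu''v 1 1 hw2ne
    have he : (1 : ZMod ℓ) • (u - z) + (1 : ZMod ℓ) • v = (u + v) - z := by module
    rwa [he] at this
  -- pairing of w₁ and w₂
  have hw12 : B ((u + v) + z) ((u + v) - z) ≠ 0 := by
    have hc : B ((u + v) + z) ((u + v) - z) = -(2 * (B u z + B v z)) := by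
      simp only [sub_eq_add_neg, B_add_left, B_add_right, B_neg_right, B_self]
      rw [show B v u = -B u v from B_neg v u, show B z u = -B u z from B_neg z u,
        show B z v = -B v z from B_neg z v]
      ring
    rw [hc]
    intro h
    rcases (show (2 : ZMod ℓ) = 0 ∨ B u z + B v z = 0 by
      simpa [neg_eq_zero, mul_eq_zero] using h) with h' | h'
    · exact h2 h'
    · exact hsum h'
  -- conclude
  have hdblne : (1 : ZMod ℓ) • ((u + v) + z) + (1 : ZMod ℓ) • ((u + v) - z) ≠ 0 := by
    have he : (1 : ZMod ℓ) • ((u + v) + z) + (1 : ZMod ℓ) • ((u + v) - z)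
        = (2 : ZMod ℓ) • (u + v) := by module
    rw [he]
    intro h
    rcases smul_eq_zero.mp h with h' | h'
    · exact h2 h'
    · exact hne h'
  have hdbl := Rset_plane hGSp hw1 hw2 hw12 1 1 hdblne
  have he : (1 : ZMod ℓ) • ((u + v) + z) + (1 : ZMod ℓ) • ((u + v) - z)
      = (2 : ZMod ℓ) • (u + v) := by module
  rw [he] at hdbl
  have hfin := Rset_smul hdbl (inv_ne_zero h2)
  rwa [smul_smul, inv_mul_cancel₀ h2, one_smul] at hfin

theorem B_zero_right (u : Fin g ⊕ Fin g → ZMod ℓ) : B u (0 : Fin g ⊕ Fin g → ZMod ℓ) = 0 := by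
  simp [B, mulVec_zero, dotProduct_zero]

theorem common_neighbor
    (hGSp : ∀ A ∈ G, ∃ γ : ZMod ℓ, γ ≠ 0 ∧
      (A : Matrix (Fin g ⊕ Fin g) (Fin g ⊕ Fin g) (ZMod ℓ))ᵀ * Jmat g (ZMod ℓ) * A
        = γ • Jmat g (ZMod ℓ))
    (hspan : Submodule.span (ZMod ℓ) (Rset G) = ⊤) (hl3 : 3 ≤ ℓ)
    {u v : Fin g ⊕ Fin g → ZMod ℓ} (hu : u ∈ Rset G)
    (hreach : Relation.ReflTransGen (Adj G) u v) :
    ∃ z ∈ Rset G, B u z ≠ 0 ∧ B v z ≠ 0 := by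
  induction hreach with
  | refl =>
    obtain ⟨w, hwR, hw⟩ := exists_pair_ne_zero hspan hu.1
    exact ⟨w, hwR, hw, hw⟩
  | @tail b c hab hbc ih =>
    obtain ⟨z, hzR, huz, hbz⟩ := ih
    obtain ⟨hbR, hcR, hbc'⟩ := hbc
    have hcb : B c b ≠ 0 := B_ne_symm hbc'
    obtain ⟨s, hs1, hs2⟩ := exists_ne_ne hl3 (-(B u z)/(B u b)) (-(B c z)/(B c b))
    have hBuz' : B u (z + s • b) = B u z + s * B u b := by
      rw [B_add_right, B_smul_right]
    have hBcz' : B c (z + s • b) = B c z + s * B c b := by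
      rw [B_add_right, B_smul_right]
    have h1 : B u (z + s • b) ≠ 0 := by
      rw [hBuz']
      intro h
      by_cases hb : B u b = 0
      · rw [hb, mul_zero, add_zero] at h
        exact huz h
      · apply hs1
        have hkey : s * B u b = -B u z := by linear_combination h
        field_simp
        linear_combination hkey
    have h2 : B c (z + s • b) ≠ 0 := by
      rw [hBcz']
      intro h
      apply hs2
      have hkey : s * B c b = -B c z := by linear_combination h
      field_simp
      linear_combination hkey
    have hne0 : (1 : ZMod ℓ) • z + s • b ≠ 0 := by
      rw [one_smul]
      intro h0
      apply h1
      rw [h0, B_zero_right]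
    have hmem := Rset_plane hGSp hzR hbR (B_ne_symm hbz) 1 s hne0
    rw [one_smul] at hmem
    exact ⟨z + s • b, hmem, h1, h2⟩

theorem Rset_add
    (hGSp : ∀ A ∈ G, ∃ γ : ZMod ℓ, γ ≠ 0 ∧
      (A : Matrix (Fin g ⊕ Fin g) (Fin g ⊕ Fin g) (ZMod ℓ))ᵀ * Jmat g (ZMod ℓ) * A
        = γ • Jmat g (ZMod ℓ))
    (hspan : Submodule.span (ZMod ℓ) (Rset G) = ⊤) (hl3 : 3 ≤ ℓ) (h2 : (2 : ZMod ℓ) ≠ 0)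
    (hconn : ∀ u ∈ Rset G, ∀ v ∈ Rset G, Relation.ReflTransGen (Adj G) u v)
    {u v : Fin g ⊕ Fin g → ZMod ℓ} (hu : u ∈ Rset G) (hv : v ∈ Rset G)
    (hne : u + v ≠ 0) : u + v ∈ Rset G := by
  rcases eq_or_ne (B u v) 0 with huv | huv
  · -- orthogonal case: find a good common neighbour
    obtain ⟨z, hzR, huz, hvz⟩ := common_neighbor hGSp hspan hl3 hu (hconn u hu v hv)
    rcases eq_or_ne (B u z + B v z) 0 with hz0 | hz0
    · -- upgrade the neighbour using a vector pairing with u + v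
      obtain ⟨y, hyR, hy⟩ := exists_pair_ne_zero hspan hne
      have hysum : B u y + B v y ≠ 0 := by
        rwa [B_add_left] at hy
      have hvzval : B v z = -B u z := by linear_combination hz0
      rcases eq_or_ne (B u y) 0 with huy | huy
      · -- B v y ≠ 0
        have hvy : B v y ≠ 0 := by
          intro h
          apply hysum
          rw [huy, h, add_zero]
        obtain ⟨α, hα, -⟩ := exists_ne_ne hl3 (-(B z y)/(B v y)) 0
        have hBux' : B u (z + α • v) = B u z := by
          rw [B_add_right, B_smul_right, huv, mul_zero, add_zero]
        have hx'ne : (1 : ZMod ℓ) • z + α • v ≠ 0 := by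
          rw [one_smul]
          intro h0
          apply huz
          rw [← hBux', h0, B_zero_right]
        have hx'R := Rset_plane hGSp hzR hv (B_ne_symm hvz) 1 α hx'ne
        rw [one_smul] at hx'R
        have hx'y : B (z + α • v) y ≠ 0 := by
          rw [B_add_left, B_smul_left]
          intro h
          apply hα
          have hkey : α * B v y = -B z y := by linear_combination h
          field_simp
          linear_combination hkey
        obtain ⟨t, ht1, ht2⟩ := exists_ne_ne hl3 ((B u z)/(B v y)) 0
        have hBuz' : B u ((z + α • v) + t • y) = B u z := by
          rw [B_add_right, B_smul_right, huy, mul_zero, add_zero, hBux']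
        have hz'ne : (1 : ZMod ℓ) • (z + α • v) + t • y ≠ 0 := by
          rw [one_smul]
          intro h0
          apply huz
          rw [← hBuz', h0, B_zero_right]
        have hz'R := Rset_plane hGSp hx'R hyR hx'y 1 t hz'ne
        rw [one_smul] at hz'R
        have hBvz' : B v ((z + α • v) + t • y) = -B u z + t * B v y := by
          rw [B_add_right, B_smul_right, B_add_right, B_smul_right, B_self, mul_zero,
            add_zero, hvzval]
        have h1 : B u ((z + α • v) + t • y) ≠ 0 := by rw [hBuz']; exact huz
        have h3 : B v ((z + α • v) + t • y) ≠ 0 := by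
          rw [hBvz']
          intro h
          apply ht1
          have hkey : t * B v y = B u z := by linear_combination h
          field_simp
          linear_combination hkey
        have h4 : B u ((z + α • v) + t • y) + B v ((z + α • v) + t • y) ≠ 0 := by
          rw [hBuz', hBvz']
          intro h
          have hkey : t * B v y = 0 := by linear_combination h
          rcases mul_eq_zero.mp hkey with h' | h'
          · exact ht2 h'
          · exact hvy h'
        exact add_mem_of_good_z hGSp h2 hu hv hz'R huv h1 h3 h4 hne
      · rcases eq_or_ne (B v y) 0 with hvy | hvy
        · -- B u y ≠ 0, symmetric
          obtain ⟨α, hα, -⟩ := exists_ne_ne hl3 (-(B z y)/(B u y)) 0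
          have hBvx' : B v (z + α • u) = -B u z := by
            rw [B_add_right, B_smul_right, show B v u = -B u v from B_neg v u, huv, hvzval]
            ring
          have hx'ne : (1 : ZMod ℓ) • z + α • u ≠ 0 := by
            rw [one_smul]
            intro h0
            apply huz
            have := hBvx'
            rw [h0, B_zero_right] at this
            have h' : B u z = 0 := by linear_combination this
            exact h'
          have hx'R := Rset_plane hGSp hzR hu (B_ne_symm huz) 1 α hx'ne
          rw [one_smul] at hx'R
          have hx'y : B (z + α • u) y ≠ 0 := by
            rw [B_add_left, B_smul_left]
            intro h
            apply hα
            have hkey : α * B u y = -B z y := by linear_combination h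
            field_simp
            linear_combination hkey
          obtain ⟨t, ht1, ht2⟩ := exists_ne_ne hl3 (-(B u z)/(B u y)) 0
          have hBvz' : B v ((z + α • u) + t • y) = -B u z := by
            rw [B_add_right, B_smul_right, hvy, mul_zero, add_zero, hBvx']
          have hz'ne : (1 : ZMod ℓ) • (z + α • u) + t • y ≠ 0 := by
            rw [one_smul]
            intro h0
            apply huz
            have := hBvz'
            rw [h0, B_zero_right] at this
            have h' : B u z = 0 := by linear_combination this
            exact h'
          have hz'R := Rset_plane hGSp hx'R hyR hx'y 1 t hz'ne
          rw [one_smul] at hz'R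
          have hBuz' : B u ((z + α • u) + t • y) = B u z + t * B u y := by
            rw [B_add_right, B_smul_right, B_add_right, B_smul_right, B_self, mul_zero,
              add_zero]
          have h1 : B u ((z + α • u) + t • y) ≠ 0 := by
            rw [hBuz']
            intro h
            apply ht1
            have hkey : t * B u y = -B u z := by linear_combination h
            field_simp
            linear_combination hkey
          have h3 : B v ((z + α • u) + t • y) ≠ 0 := by
            rw [hBvz']
            simpa [neg_eq_zero] using huz
          have h4 : B u ((z + α • u) + t • y) + B v ((z + α • u) + t • y) ≠ 0 := by
            rw [hBuz', hBvz']
            intro h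
            have hkey : t * B u y = 0 := by linear_combination h
            rcases mul_eq_zero.mp hkey with h' | h'
            · exact ht2 h'
            · exact huy h'
          exact add_mem_of_good_z hGSp h2 hu hv hz'R huv h1 h3 h4 hne
        · -- both pairings nonzero: use y itself
          exact add_mem_of_good_z hGSp h2 hu hv hyR huv huy hvy hysum hne
    · exact add_mem_of_good_z hGSp h2 hu hv hzR huv huz hvz hz0 hne
  · have h := Rset_plane hGSp hu hv huv 1 1 (by rw [one_smul, one_smul]; exact hne)
    rwa [one_smul, one_smul] at h

theorem Rset_all
    (hGSp : ∀ A ∈ G, ∃ γ : ZMod ℓ, γ ≠ 0 ∧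
      (A : Matrix (Fin g ⊕ Fin g) (Fin g ⊕ Fin g) (ZMod ℓ))ᵀ * Jmat g (ZMod ℓ) * A
        = γ • Jmat g (ZMod ℓ))
    (hspan : Submodule.span (ZMod ℓ) (Rset G) = ⊤) (hl3 : 3 ≤ ℓ) (h2 : (2 : ZMod ℓ) ≠ 0)
    (hconn : ∀ u ∈ Rset G, ∀ v ∈ Rset G, Relation.ReflTransGen (Adj G) u v)
    {x : Fin g ⊕ Fin g → ZMod ℓ} (hx : x ≠ 0) : x ∈ Rset G := by
  let W : Submodule (ZMod ℓ) (Fin g ⊕ Fin g → ZMod ℓ) :=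
    { carrier := Rset G ∪ {0}
      zero_mem' := by simp
      add_mem' := by
        rintro a b (ha | ha) (hb | hb)
        · rcases eq_or_ne (a + b) 0 with h | h
          · right; simpa using h
          · left; exact Rset_add hGSp hspan hl3 h2 hconn ha hb h
        · simp only [Set.mem_singleton_iff] at hb
          subst hb
          left; simpa using ha
        · simp only [Set.mem_singleton_iff] at ha
          subst ha
          left; simpa using hb
        · simp only [Set.mem_singleton_iff] at ha hb
          subst ha; subst hb
          right; simp
      smul_mem' := by
        rintro c a (ha | ha)
        · rcases eq_or_ne c 0 with rfl | hc
          · right; simp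
          · left; exact Rset_smul ha hc
        · simp only [Set.mem_singleton_iff] at ha
          subst ha
          right; simp }
  have hle : Submodule.span (ZMod ℓ) (Rset G) ≤ W := by
    rw [Submodule.span_le]
    intro w hw
    exact Or.inl hw
  rw [hspan] at hle
  rcases hle (Submodule.mem_top : x ∈ ⊤) with h | h
  · exact h
  · exact absurd (by simpa using h) hx

theorem mulVec_inv_mulVec {M : (Matrix (Fin g ⊕ Fin g) (Fin g ⊕ Fin g) (ZMod ℓ))ˣ}
    (x : Fin g ⊕ Fin g → ZMod ℓ) :
    ((M⁻¹ : (Matrix (Fin g ⊕ Fin g) (Fin g ⊕ Fin g) (ZMod ℓ))ˣ) :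
        Matrix (Fin g ⊕ Fin g) (Fin g ⊕ Fin g) (ZMod ℓ)) *ᵥ
      ((M : Matrix (Fin g ⊕ Fin g) (Fin g ⊕ Fin g) (ZMod ℓ)) *ᵥ x) = x := by
  rw [mulVec_mulVec, ← Units.val_mul, inv_mul_cancel, Units.val_one, one_mulVec]

theorem mulVec_mulVec_inv {M : (Matrix (Fin g ⊕ Fin g) (Fin g ⊕ Fin g) (ZMod ℓ))ˣ}
    (x : Fin g ⊕ Fin g → ZMod ℓ) :
    (M : Matrix (Fin g ⊕ Fin g) (Fin g ⊕ Fin g) (ZMod ℓ)) *ᵥ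
      (((M⁻¹ : (Matrix (Fin g ⊕ Fin g) (Fin g ⊕ Fin g) (ZMod ℓ))ˣ) :
        Matrix (Fin g ⊕ Fin g) (Fin g ⊕ Fin g) (ZMod ℓ)) *ᵥ x) = x := by
  rw [mulVec_mulVec, ← Units.val_mul, mul_inv_cancel, Units.val_one, one_mulVec]

theorem reach_map
    (hGSp : ∀ A ∈ G, ∃ γ : ZMod ℓ, γ ≠ 0 ∧
      (A : Matrix (Fin g ⊕ Fin g) (Fin g ⊕ Fin g) (ZMod ℓ))ᵀ * Jmat g (ZMod ℓ) * A
        = γ • Jmat g (ZMod ℓ))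
    {M : (Matrix (Fin g ⊕ Fin g) (Fin g ⊕ Fin g) (ZMod ℓ))ˣ} (hM : M ∈ G)
    {x y : Fin g ⊕ Fin g → ZMod ℓ} (hxy : Relation.ReflTransGen (Adj G) x y) :
    Relation.ReflTransGen (Adj G)
      ((M : Matrix (Fin g ⊕ Fin g) (Fin g ⊕ Fin g) (ZMod ℓ)) *ᵥ x)
      ((M : Matrix (Fin g ⊕ Fin g) (Fin g ⊕ Fin g) (ZMod ℓ)) *ᵥ y) := by
  induction hxy with
  | refl => exact Relation.ReflTransGen.refl
  | @tail b c hab hbc ih =>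
    refine Relation.ReflTransGen.tail ih ?_
    obtain ⟨hbR, hcR, hbc'⟩ := hbc
    obtain ⟨γ, hγ, hsp⟩ := hGSp M hM
    refine ⟨Rset_conj hGSp hbR hM, Rset_conj hGSp hcR hM, ?_⟩
    rw [B_map hsp]
    exact mul_ne_zero hγ hbc'

theorem Rset_conn (hg : 2 ≤ g)
    (hGSp : ∀ A ∈ G, ∃ γ : ZMod ℓ, γ ≠ 0 ∧
      (A : Matrix (Fin g ⊕ Fin g) (Fin g ⊕ Fin g) (ZMod ℓ))ᵀ * Jmat g (ZMod ℓ) * A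
        = γ • Jmat g (ZMod ℓ))
    (hspan : Submodule.span (ZMod ℓ) (Rset G) = ⊤)
    (hprim : ¬ ∃ (r : ℕ) (_ : 2 ≤ r)
      (W : Fin r → Submodule (ZMod ℓ) (Fin g ⊕ Fin g → ZMod ℓ)),
      (∀ i, W i ≠ ⊥) ∧ (⨆ i, W i) = ⊤ ∧
      (∀ i, W i ⊓ (⨆ j, ⨆ (_ : j ≠ i), W j) = ⊥) ∧
      (∀ A ∈ G, ∀ i, ∃ j,
        Submodule.map
          (Matrix.toLin' (A : Matrix (Fin g ⊕ Fin g) (Fin g ⊕ Fin g) (ZMod ℓ))) (W i) = W j)) :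
    ∀ u ∈ Rset G, ∀ v ∈ Rset G, Relation.ReflTransGen (Adj G) u v := by
  classical
  by_contra hcon
  push_neg at hcon
  obtain ⟨u₀, hu₀, v₀, hv₀, hnr⟩ := hcon
  haveI : NeZero ℓ := ⟨(Fact.out : ℓ.Prime).ne_zero⟩
  apply hprim
  -- the setoid of connected components
  let St : Setoid ↥(Rset G) :=
    ⟨fun a b => Relation.ReflTransGen (Adj G) a.1 b.1,
      fun _ => Relation.ReflTransGen.refl,
      fun h => by
        haveI : Std.Symm (Adj G) := ⟨fun _ _ hadj => ⟨hadj.2.1, hadj.1, B_ne_symm hadj.2.2⟩⟩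
        exact Std.Symm.symm _ _ h,
      fun h1 h2 => Relation.ReflTransGen.trans h1 h2⟩
  let Q := Quotient St
  haveI : Fintype Q := Fintype.ofFinite Q
  let Cl : Q → Set (Fin g ⊕ Fin g → ZMod ℓ) :=
    fun q => {w | ∃ h : w ∈ Rset G, Quotient.mk St ⟨w, h⟩ = q}
  let WQ : Q → Submodule (ZMod ℓ) (Fin g ⊕ Fin g → ZMod ℓ) :=
    fun q => Submodule.span (ZMod ℓ) (Cl q)
  -- basic facts
  have hCl_mem : ∀ {w} (h : w ∈ Rset G), w ∈ Cl (Quotient.mk St ⟨w, h⟩) := by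
    intro w h
    exact ⟨h, rfl⟩
  have hCl_sub : ∀ q, Cl q ⊆ Rset G := by
    rintro q w ⟨h, -⟩
    exact h
  have hUnion : (⋃ q, Cl q) = Rset G := by
    apply Set.eq_of_subset_of_subset
    · exact Set.iUnion_subset hCl_sub
    · intro w hw
      exact Set.mem_iUnion.mpr ⟨_, hCl_mem hw⟩
  have hOrth : ∀ {q q'}, q ≠ q' → ∀ {w w'}, w ∈ Cl q → w' ∈ Cl q' → B w w' = 0 := by
    rintro q q' hqq' w w' ⟨hw, hwc⟩ ⟨hw', hwc'⟩
    by_contra hB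
    apply hqq'
    rw [← hwc, ← hwc']
    exact Quotient.sound (Relation.ReflTransGen.single ⟨hw, hw', hB⟩)
  have hOrthW : ∀ {q q'}, q ≠ q' → ∀ {w}, w ∈ Cl q → WQ q' ≤ LinearMap.ker (Bfunc w) := by
    intro q q' hqq' w hw
    rw [Submodule.span_le]
    intro w' hw'
    exact hOrth hqq' hw hw'
  have hOrthWW : ∀ {q q'}, q ≠ q' → ∀ {x y}, x ∈ WQ q → y ∈ WQ q' → B x y = 0 := by
    intro q q' hqq' x y hx hy
    have h1 : WQ q ≤ LinearMap.ker (Bfunc y) := by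
      rw [Submodule.span_le]
      intro w hw
      have h2 : B w y = 0 := hOrthW hqq' hw hy
      have h3 : B y w = 0 := by rw [B_neg, h2, neg_zero]
      exact h3
    have := h1 hx
    rw [LinearMap.mem_ker] at this
    have h4 : B y x = 0 := this
    rw [B_neg, h4, neg_zero]
  -- the image facts
  have himage : ∀ {M : (Matrix (Fin g ⊕ Fin g) (Fin g ⊕ Fin g) (ZMod ℓ))ˣ}, M ∈ G →
      ∀ q, ∃ q', (fun w => (M : Matrix (Fin g ⊕ Fin g) (Fin g ⊕ Fin g) (ZMod ℓ)) *ᵥ w) '' Cl q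
        = Cl q' := by
    intro M hM q
    induction q using Quotient.ind with
    | _ a =>
      refine ⟨Quotient.mk St ⟨(M : Matrix (Fin g ⊕ Fin g) (Fin g ⊕ Fin g) (ZMod ℓ)) *ᵥ a.1,
        Rset_conj hGSp a.2 hM⟩, ?_⟩
      apply Set.eq_of_subset_of_subset
      · rintro x ⟨w, ⟨hw, hwc⟩, rfl⟩
        refine ⟨Rset_conj hGSp hw hM, ?_⟩
        apply Quotient.sound
        have hr : Relation.ReflTransGen (Adj G) w a.1 := Quotient.exact hwc
        exact reach_map hGSp hM hr
      · rintro w' ⟨hw', hwc'⟩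
        have hr : Relation.ReflTransGen (Adj G) w'
            ((M : Matrix (Fin g ⊕ Fin g) (Fin g ⊕ Fin g) (ZMod ℓ)) *ᵥ a.1) :=
          Quotient.exact hwc'
        have hr2 := reach_map hGSp (inv_mem hM) hr
        rw [mulVec_inv_mulVec] at hr2
        refine ⟨((M⁻¹ : (Matrix (Fin g ⊕ Fin g) (Fin g ⊕ Fin g) (ZMod ℓ))ˣ) :
            Matrix (Fin g ⊕ Fin g) (Fin g ⊕ Fin g) (ZMod ℓ)) *ᵥ w',
          ⟨Rset_conj hGSp hw' (inv_mem hM), Quotient.sound hr2⟩, ?_⟩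
        exact mulVec_mulVec_inv w'
  -- now build the decomposition
  set r := Fintype.card Q with hr
  have hQ2 : Quotient.mk St (⟨u₀, hu₀⟩ : ↥(Rset G)) ≠ Quotient.mk St ⟨v₀, hv₀⟩ := by
    intro h
    exact hnr (Quotient.exact h)
  have hr2 : 2 ≤ r := by
    rw [hr]
    have : 1 < Fintype.card Q := Fintype.one_lt_card_iff_nontrivial.mpr ⟨_, _, hQ2⟩
    omega
  let e : Q ≃ Fin r := Fintype.equivFin Q
  refine ⟨r, hr2, fun i => WQ (e.symm i), ?_, ?_, ?_, ?_⟩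
  · -- nonbot
    intro i
    obtain ⟨a, ha⟩ := (e.symm i).exists_rep
    intro hbot
    have hbot' : WQ (e.symm i) = ⊥ := hbot
    have hmem : a.1 ∈ WQ (e.symm i) := Submodule.subset_span ⟨a.2, ha⟩
    rw [hbot'] at hmem
    exact a.2.1 (by simpa using hmem)
  · -- sup is top
    have h1 : ⨆ i, WQ (e.symm i) = ⨆ q, WQ q := by
      apply Equiv.iSup_congr e.symm
      intro q
      rfl
    rw [h1]
    have h2 : ⨆ q, WQ q = Submodule.span (ZMod ℓ) (⋃ q, Cl q) :=
      (Submodule.span_iUnion _).symm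
    rw [h2, hUnion, hspan]
  · -- independence
    intro i
    rw [eq_bot_iff]
    rintro x ⟨hx1, hx2⟩
    have hx1' : x ∈ WQ (e.symm i) := hx1
    have hx2' : x ∈ (⨆ j, ⨆ (_ : j ≠ i), WQ (e.symm j)) := hx2
    rw [Submodule.mem_bot]
    by_contra hx0
    obtain ⟨w, hwR, hw⟩ := exists_pair_ne_zero hspan hx0
    apply hw
    obtain ⟨hwmem, hwc⟩ : w ∈ Cl (Quotient.mk St ⟨w, hwR⟩) := hCl_mem hwR
    rcases eq_or_ne (Quotient.mk St (⟨w, hwR⟩ : ↥(Rset G))) (e.symm i) with hq | hq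
    · -- w in the distinguished class, use x ∈ sup of others
      have hsup : (⨆ j, ⨆ (_ : j ≠ i), WQ (e.symm j)) ≤ LinearMap.ker (Bfunc w) := by
        apply iSup_le
        intro j
        apply iSup_le
        intro hj
        refine hOrthW ?_ (hq ▸ hCl_mem hwR)
        intro hcontra
        exact hj (e.symm.injective hcontra).symm
      have := hsup hx2'
      rw [LinearMap.mem_ker] at this
      have h4 : B w x = 0 := this
      rw [B_neg, h4, neg_zero]
    · -- w in another class
      exact hOrthWW (Ne.symm hq) hx1' (Submodule.subset_span (hCl_mem hwR))
  · -- permutation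
    intro A hA i
    obtain ⟨q', hq'⟩ := himage hA (e.symm i)
    refine ⟨e q', ?_⟩
    show Submodule.map (Matrix.toLin' (A : Matrix (Fin g ⊕ Fin g) (Fin g ⊕ Fin g) (ZMod ℓ)))
      (WQ (e.symm i)) = WQ (e.symm (e q'))
    rw [Equiv.symm_apply_apply]
    show Submodule.map _ (Submodule.span _ (Cl (e.symm i))) = Submodule.span _ (Cl q')
    rw [Submodule.map_span]
    have himg : Matrix.toLin' (A : Matrix (Fin g ⊕ Fin g) (Fin g ⊕ Fin g) (ZMod ℓ)) ''
        (Cl (e.symm i)) = Cl q' := by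
      rw [← hq']
      apply Set.image_congr
      intro w _
      simp [Matrix.toLin'_apply]
    rw [himg]

/-! ### Generation of `Sp` by transvections -/

theorem B_sub_right (u v w : Fin g ⊕ Fin g → ZMod ℓ) : B u (v - w) = B u v - B u w := by
  rw [sub_eq_add_neg, B_add_right, B_neg_right, sub_eq_add_neg]

theorem B_sub_left (u v w : Fin g ⊕ Fin g → ZMod ℓ) : B (u - v) w = B u w - B v w := by
  rw [sub_eq_add_neg, B_add_left, B_neg_left, sub_eq_add_neg]

/-- the standard basis vectors of the symplectic basis -/
def eb (a : Fin g) : Fin g ⊕ Fin g → ZMod ℓ := Pi.single (Sum.inl a) 1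

def fb (a : Fin g) : Fin g ⊕ Fin g → ZMod ℓ := Pi.single (Sum.inr a) 1

theorem B_eb (x : Fin g ⊕ Fin g → ZMod ℓ) (a : Fin g) : B x (eb a) = -x (Sum.inr a) :=
  B_single_inl x a

theorem B_fb (x : Fin g ⊕ Fin g → ZMod ℓ) (a : Fin g) : B x (fb a) = x (Sum.inl a) :=
  B_single_inr x a

theorem eb_apply_inl (a b : Fin g) : eb (ℓ := ℓ) a (Sum.inl b) = if a = b then 1 else 0 := by
  rw [eb, Pi.single_apply]
  simp [eq_comm]

theorem eb_apply_inr (a b : Fin g) : eb (ℓ := ℓ) a (Sum.inr b) = 0 := by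
  rw [eb, Pi.single_apply]
  simp

theorem fb_apply_inl (a b : Fin g) : fb (ℓ := ℓ) a (Sum.inl b) = 0 := by
  rw [fb, Pi.single_apply]
  simp

theorem fb_apply_inr (a b : Fin g) : fb (ℓ := ℓ) a (Sum.inr b) = if a = b then 1 else 0 := by
  rw [fb, Pi.single_apply]
  simp [eq_comm]

theorem eb_ne_zero (a : Fin g) : eb (ℓ := ℓ) a ≠ 0 := by
  intro h
  have := congrFun h (Sum.inl a)
  rw [eb_apply_inl] at this
  simp at this

theorem fb_ne_zero (a : Fin g) : fb (ℓ := ℓ) a ≠ 0 := by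
  intro h
  have := congrFun h (Sum.inr a)
  rw [fb_apply_inr] at this
  simp at this

/-- symplectic matrices -/
def IsSp (M : Matrix (Fin g ⊕ Fin g) (Fin g ⊕ Fin g) (ZMod ℓ)) : Prop :=
  Mᵀ * Jmat g (ZMod ℓ) * M = Jmat g (ZMod ℓ)

theorem IsSp.mul {M N : Matrix (Fin g ⊕ Fin g) (Fin g ⊕ Fin g) (ZMod ℓ)}
    (hM : IsSp M) (hN : IsSp N) : IsSp (M * N) := by
  rw [IsSp, transpose_mul]
  calc Nᵀ * Mᵀ * Jmat g (ZMod ℓ) * (M * N)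
      = Nᵀ * (Mᵀ * Jmat g (ZMod ℓ) * M) * N := by
        simp only [Matrix.mul_assoc]
    _ = Jmat g (ZMod ℓ) := by rw [hM]; exact hN

theorem IsSp.one : IsSp (1 : Matrix (Fin g ⊕ Fin g) (Fin g ⊕ Fin g) (ZMod ℓ)) := by
  rw [IsSp]
  simp

theorem IsSp.B_apply {M : Matrix (Fin g ⊕ Fin g) (Fin g ⊕ Fin g) (ZMod ℓ)} (hM : IsSp M)
    (x y : Fin g ⊕ Fin g → ZMod ℓ) : B (M *ᵥ x) (M *ᵥ y) = B x y := by
  have h := B_map (M := M) (γ := 1) (by rw [one_smul]; exact hM) x y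
  rwa [one_mul] at h

theorem Tmat_fix {w : Fin g ⊕ Fin g → ZMod ℓ} {c : ZMod ℓ} {x : Fin g ⊕ Fin g → ZMod ℓ}
    (h : B x w = 0) : Tmat w c *ᵥ x = x := by
  rw [Tmat_mulVec, h, mul_zero, zero_smul, add_zero]

/-- fixing the first `m` hyperbolic pairs -/
def Fixes (S : Matrix (Fin g ⊕ Fin g) (Fin g ⊕ Fin g) (ZMod ℓ)) (m : ℕ) : Prop :=
  ∀ a : Fin g, (a : ℕ) < m → S *ᵥ eb a = eb a ∧ S *ᵥ fb a = fb a

/-- perpendicular to the first `m` hyperbolic pairs -/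
def Perp (m : ℕ) (w : Fin g ⊕ Fin g → ZMod ℓ) : Prop :=
  ∀ a : Fin g, (a : ℕ) < m → B (eb a) w = 0 ∧ B (fb a) w = 0

theorem Perp.add {m : ℕ} {w w' : Fin g ⊕ Fin g → ZMod ℓ} (h : Perp m w) (h' : Perp m w') :
    Perp m (w + w') := by
  intro a ha
  rw [B_add_right, B_add_right, (h a ha).1, (h a ha).2, (h' a ha).1, (h' a ha).2]
  simp

theorem Perp.sub {m : ℕ} {w w' : Fin g ⊕ Fin g → ZMod ℓ} (h : Perp m w) (h' : Perp m w') :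
    Perp m (w - w') := by
  intro a ha
  rw [B_sub_right, B_sub_right, (h a ha).1, (h a ha).2, (h' a ha).1, (h' a ha).2]
  simp

theorem Perp.tmat_fixes {m : ℕ} {w : Fin g ⊕ Fin g → ZMod ℓ} (h : Perp m w) (c : ZMod ℓ) :
    Fixes (Tmat w c) m := by
  intro a ha
  exact ⟨Tmat_fix (h a ha).1, Tmat_fix (h a ha).2⟩

theorem Fixes.mul {S S' : Matrix (Fin g ⊕ Fin g) (Fin g ⊕ Fin g) (ZMod ℓ)} {m : ℕ}
    (hS : Fixes S m) (hS' : Fixes S' m) : Fixes (S * S') m := by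
  intro a ha
  constructor
  · rw [← mulVec_mulVec, (hS' a ha).1, (hS a ha).1]
  · rw [← mulVec_mulVec, (hS' a ha).2, (hS a ha).2]

theorem Perp.coords {m : ℕ} {w : Fin g ⊕ Fin g → ZMod ℓ} (h : Perp m w) (a : Fin g)
    (ha : (a : ℕ) < m) : w (Sum.inl a) = 0 ∧ w (Sum.inr a) = 0 := by
  have h1 := (h a ha).1
  have h2 := (h a ha).2
  rw [B_neg, B_eb, neg_neg] at h1
  rw [B_neg, B_fb, neg_eq_zero] at h2
  exact ⟨h2, h1⟩

theorem eb_perp (m : ℕ) (b : Fin g) (hb : m ≤ (b : ℕ)) : Perp m (eb (ℓ := ℓ) b) := by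
  intro a ha
  constructor
  · rw [B_eb, eb_apply_inr, neg_zero]
  · rw [B_eb, fb_apply_inr]
    have : a ≠ b := by
      intro h
      subst h
      omega
    simp [this]

theorem fb_perp (m : ℕ) (b : Fin g) (hb : m ≤ (b : ℕ)) : Perp m (fb (ℓ := ℓ) b) := by
  intro a ha
  constructor
  · rw [B_fb, eb_apply_inl]
    have : a ≠ b := by
      intro h
      subst h
      omega
    simp [this]
  · rw [B_fb, fb_apply_inl]

theorem Tmat_send {v w : Fin g ⊕ Fin g → ZMod ℓ} (hw : B v w ≠ 0) :
    Tmat w (B v w)⁻¹ *ᵥ v = v + w := by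
  rw [Tmat_mulVec, inv_mul_cancel₀ hw, one_smul]

theorem perp_partner {m : ℕ} {v : Fin g ⊕ Fin g → ZMod ℓ} (hv : v ≠ 0) (hP : Perp m v) :
    ∃ w, Perp m w ∧ B v w ≠ 0 := by
  obtain ⟨i, hi⟩ : ∃ i, v i ≠ 0 := by
    by_contra h
    push_neg at h
    exact hv (funext h)
  cases i with
  | inl a =>
    have ham : m ≤ (a : ℕ) := by
      by_contra h
      push_neg at h
      exact hi ((hP.coords a h).1)
    exact ⟨fb a, fb_perp m a ham, by rw [B_fb]; exact hi⟩
  | inr a =>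
    have ham : m ≤ (a : ℕ) := by
      by_contra h
      push_neg at h
      exact hi ((hP.coords a h).2)
    exact ⟨eb a, eb_perp m a ham, by rw [B_eb]; exact neg_ne_zero.mpr hi⟩

theorem move_to_eb (hT : ∀ (w : Fin g ⊕ Fin g → ZMod ℓ) (c : ZMod ℓ), w ≠ 0 → Tunit w c ∈ G)
    {m : ℕ} (hm : m < g) {v : Fin g ⊕ Fin g → ZMod ℓ} (hv : v ≠ 0) (hP : Perp m v) :
    ∃ T : GL, T ∈ G ∧ IsSp (T : Matrix (Fin g ⊕ Fin g) (Fin g ⊕ Fin g) (ZMod ℓ)) ∧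
      Fixes (T : Matrix (Fin g ⊕ Fin g) (Fin g ⊕ Fin g) (ZMod ℓ)) m ∧
      (T : Matrix (Fin g ⊕ Fin g) (Fin g ⊕ Fin g) (ZMod ℓ)) *ᵥ v = eb ⟨m, hm⟩ := by
  set a₀ : Fin g := ⟨m, hm⟩ with ha₀
  have hPe : Perp m (eb (ℓ := ℓ) a₀) := eb_perp m a₀ le_rfl
  have hPf : Perp m (fb (ℓ := ℓ) a₀) := fb_perp m a₀ le_rfl
  have he₀f₀ : B (eb (ℓ := ℓ) a₀) (fb a₀) = 1 := by
    rw [B_fb, eb_apply_inl]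
    simp
  by_cases hve : v = eb a₀
  · refine ⟨1, one_mem G, by simpa using (IsSp.one (g := g) (ℓ := ℓ)), ?_, by simp [hve]⟩
    intro a ha
    simp
  · by_cases hB : B v (eb a₀) = 0
    · -- need a bridge
      obtain ⟨w₁, hw₁P, hw₁B⟩ := perp_partner hv hP
      obtain ⟨w₀, hw₀P, hvw₀, hew₀⟩ :
          ∃ w₀, Perp m w₀ ∧ B v w₀ ≠ 0 ∧ B (eb (ℓ := ℓ) a₀) w₀ ≠ 0 := by
        by_cases h1 : B (eb (ℓ := ℓ) a₀) w₁ = 0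
        · by_cases h2 : B v (fb (ℓ := ℓ) a₀) = 0
          · refine ⟨w₁ + fb a₀, hw₁P.add hPf, ?_, ?_⟩
            · rw [B_add_right, h2, add_zero]; exact hw₁B
            · rw [B_add_right, h1, zero_add, he₀f₀]; exact one_ne_zero
          · exact ⟨fb a₀, hPf, h2, by rw [he₀f₀]; exact one_ne_zero⟩
        · exact ⟨w₁, hw₁P, hw₁B, h1⟩
      have hw₀v : w₀ - v ≠ 0 := by
        intro h
        rw [sub_eq_zero] at h
        apply hvw₀
        rw [← h, B_self]
      have he₀w₀ : eb (ℓ := ℓ) a₀ - w₀ ≠ 0 := by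
        intro h
        rw [sub_eq_zero] at h
        apply hew₀
        rw [← h, B_self]
      have hBv : B v (w₀ - v) = B v w₀ := by rw [B_sub_right, B_self, sub_zero]
      have hBv' : B v (w₀ - v) ≠ 0 := by rw [hBv]; exact hvw₀
      have hBw : B w₀ (eb (ℓ := ℓ) a₀ - w₀) = B w₀ (eb a₀) := by
        rw [B_sub_right, B_self, sub_zero]
      have hBw0 : B w₀ (eb (ℓ := ℓ) a₀) ≠ 0 := by
        rw [B_neg]
        exact neg_ne_zero.mpr hew₀
      have hBw' : B w₀ (eb (ℓ := ℓ) a₀ - w₀) ≠ 0 := by rw [hBw]; exact hBw0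
      refine ⟨Tunit (eb a₀ - w₀) (B w₀ (eb a₀ - w₀))⁻¹ * Tunit (w₀ - v) (B v (w₀ - v))⁻¹,
        mul_mem (hT _ _ he₀w₀) (hT _ _ hw₀v), ?_, ?_, ?_⟩
      · rw [Units.val_mul, Tunit_val, Tunit_val]
        exact IsSp.mul (Tmat_sp _ _) (Tmat_sp _ _)
      · rw [Units.val_mul, Tunit_val, Tunit_val]
        exact ((hPe.sub hw₀P).tmat_fixes _).mul ((hw₀P.sub hP).tmat_fixes _)
      · rw [Units.val_mul, Tunit_val, Tunit_val, ← mulVec_mulVec, Tmat_send hBv',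
          add_sub_cancel, Tmat_send hBw', add_sub_cancel]
    · -- single transvection
      have hw : eb (ℓ := ℓ) a₀ - v ≠ 0 := sub_ne_zero.mpr fun h => hve h.symm
      have hBv : B v (eb (ℓ := ℓ) a₀ - v) = B v (eb a₀) := by
        rw [B_sub_right, B_self, sub_zero]
      have hBv' : B v (eb (ℓ := ℓ) a₀ - v) ≠ 0 := by rw [hBv]; exact hB
      refine ⟨Tunit (eb a₀ - v) (B v (eb a₀ - v))⁻¹, hT _ _ hw, ?_, ?_, ?_⟩
      · rw [Tunit_val]; exact Tmat_sp _ _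
      · rw [Tunit_val]; exact (hPe.sub hP).tmat_fixes _
      · rw [Tunit_val, Tmat_send hBv', add_sub_cancel]

theorem move_to_fb (hT : ∀ (w : Fin g ⊕ Fin g → ZMod ℓ) (c : ZMod ℓ), w ≠ 0 → Tunit w c ∈ G)
    {m : ℕ} (hm : m < g) {v : Fin g ⊕ Fin g → ZMod ℓ} (hP : Perp m v)
    (hBe : B (eb ⟨m, hm⟩) v = 1) :
    ∃ T : GL, T ∈ G ∧ IsSp (T : Matrix (Fin g ⊕ Fin g) (Fin g ⊕ Fin g) (ZMod ℓ)) ∧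
      Fixes (T : Matrix (Fin g ⊕ Fin g) (Fin g ⊕ Fin g) (ZMod ℓ)) m ∧
      (T : Matrix (Fin g ⊕ Fin g) (Fin g ⊕ Fin g) (ZMod ℓ)) *ᵥ eb ⟨m, hm⟩ = eb ⟨m, hm⟩ ∧
      (T : Matrix (Fin g ⊕ Fin g) (Fin g ⊕ Fin g) (ZMod ℓ)) *ᵥ v = fb ⟨m, hm⟩ := by
  set a₀ : Fin g := ⟨m, hm⟩ with ha₀
  have hPe : Perp m (eb (ℓ := ℓ) a₀) := eb_perp m a₀ le_rfl
  have hPf : Perp m (fb (ℓ := ℓ) a₀) := fb_perp m a₀ le_rfl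
  have he₀f₀ : B (eb (ℓ := ℓ) a₀) (fb a₀) = 1 := by
    rw [B_fb, eb_apply_inl]
    simp
  have he₀e₀ : B (eb (ℓ := ℓ) a₀) (eb a₀) = 0 := B_self _
  by_cases hvf : v = fb a₀
  · refine ⟨1, one_mem G, by simpa using (IsSp.one (g := g) (ℓ := ℓ)), ?_, by simp, by
      simp [hvf]⟩
    intro a ha
    simp
  · by_cases hB : B v (fb a₀) = 0
    · -- two steps via v + e₀
      have hve₀ : B v (eb (ℓ := ℓ) a₀) = -1 := by
        rw [B_neg, hBe]
      have hstep1 : Tmat (eb (ℓ := ℓ) a₀) (-1) *ᵥ v = v + eb a₀ := by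
        rw [Tmat_mulVec, hve₀]
        norm_num
      set vA := v + eb (ℓ := ℓ) a₀ with hvA
      have hPvA : Perp m vA := hP.add hPe
      have hvAf : B vA (fb (ℓ := ℓ) a₀) = 1 := by
        rw [hvA, B_add_left, hB, zero_add, he₀f₀]
      have hevA : B (eb (ℓ := ℓ) a₀) vA = 1 := by
        rw [hvA, B_add_right, hBe, he₀e₀, add_zero]
      have hwne : fb (ℓ := ℓ) a₀ - vA ≠ 0 := by
        intro h
        rw [sub_eq_zero] at h
        rw [← h] at hvAf
        rw [B_self] at hvAf
        exact zero_ne_one hvAf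
      have hBvA : B vA (fb (ℓ := ℓ) a₀ - vA) = 1 := by
        rw [B_sub_right, B_self, sub_zero, hvAf]
      have hBvA' : B vA (fb (ℓ := ℓ) a₀ - vA) ≠ 0 := by rw [hBvA]; exact one_ne_zero
      have heW : B (eb (ℓ := ℓ) a₀) (fb a₀ - vA) = 0 := by
        rw [B_sub_right, he₀f₀, hevA, sub_self]
      refine ⟨Tunit (fb a₀ - vA) (B vA (fb a₀ - vA))⁻¹ * Tunit (eb a₀) (-1),
        mul_mem (hT _ _ hwne) (hT _ _ (eb_ne_zero a₀)), ?_, ?_, ?_, ?_⟩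
      · rw [Units.val_mul, Tunit_val, Tunit_val]
        exact IsSp.mul (Tmat_sp _ _) (Tmat_sp _ _)
      · rw [Units.val_mul, Tunit_val, Tunit_val]
        exact ((hPf.sub hPvA).tmat_fixes _).mul (hPe.tmat_fixes _)
      · rw [Units.val_mul, Tunit_val, Tunit_val, ← mulVec_mulVec,
          Tmat_fix he₀e₀, Tmat_fix heW]
      · rw [Units.val_mul, Tunit_val, Tunit_val, ← mulVec_mulVec, hstep1,
          Tmat_send hBvA', add_sub_cancel]
    · -- single transvection
      have hwne : fb (ℓ := ℓ) a₀ - v ≠ 0 := sub_ne_zero.mpr fun h => hvf h.symm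
      have hBv : B v (fb (ℓ := ℓ) a₀ - v) = B v (fb a₀) := by
        rw [B_sub_right, B_self, sub_zero]
      have hBv' : B v (fb (ℓ := ℓ) a₀ - v) ≠ 0 := by rw [hBv]; exact hB
      have heW : B (eb (ℓ := ℓ) a₀) (fb a₀ - v) = 0 := by
        rw [B_sub_right, he₀f₀, hBe, sub_self]
      refine ⟨Tunit (fb a₀ - v) (B v (fb a₀ - v))⁻¹, hT _ _ hwne, ?_, ?_, ?_, ?_⟩
      · rw [Tunit_val]; exact Tmat_sp _ _
      · rw [Tunit_val]; exact (hPf.sub hP).tmat_fixes _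
      · rw [Tunit_val, Tmat_fix heW]
      · rw [Tunit_val, Tmat_send hBv', add_sub_cancel]

theorem fixes_succ (hT : ∀ (w : Fin g ⊕ Fin g → ZMod ℓ) (c : ZMod ℓ), w ≠ 0 → Tunit w c ∈ G)
    {m : ℕ} (hm : m < g) {S : GL}
    (hS : IsSp (S : Matrix (Fin g ⊕ Fin g) (Fin g ⊕ Fin g) (ZMod ℓ)))
    (hfix : Fixes (S : Matrix (Fin g ⊕ Fin g) (Fin g ⊕ Fin g) (ZMod ℓ)) m) :
    ∃ T : GL, T ∈ G ∧ IsSp (T : Matrix (Fin g ⊕ Fin g) (Fin g ⊕ Fin g) (ZMod ℓ)) ∧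
      Fixes ((T * S : GL) : Matrix (Fin g ⊕ Fin g) (Fin g ⊕ Fin g) (ZMod ℓ)) (m + 1) := by
  set a₀ : Fin g := ⟨m, hm⟩ with ha₀
  set Sm := (S : Matrix (Fin g ⊕ Fin g) (Fin g ⊕ Fin g) (ZMod ℓ)) with hSm
  -- move `S e₀` back to `e₀`
  have hv0 : Sm *ᵥ eb a₀ ≠ 0 := mulVec_ne_zero (eb_ne_zero a₀)
  have hPv : Perp m (Sm *ᵥ eb a₀) := by
    intro a ha
    constructor
    · rw [← (hfix a ha).1, hS.B_apply, B_eb, eb_apply_inr, neg_zero]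
    · rw [← (hfix a ha).2, hS.B_apply, B_eb, fb_apply_inr]
      have hne : a ≠ a₀ := by
        intro h
        rw [ha₀] at h
        subst h
        simp at ha
      simp [hne]
  obtain ⟨T₁, hT₁G, hT₁sp, hT₁fix, hT₁v⟩ := move_to_eb hT hm hv0 hPv
  set S' := T₁ * S with hS'
  have hS'sp : IsSp ((S' : GL) : Matrix (Fin g ⊕ Fin g) (Fin g ⊕ Fin g) (ZMod ℓ)) := by
    rw [hS', Units.val_mul]
    exact hT₁sp.mul hS
  have hS'fix : Fixes ((S' : GL) : Matrix (Fin g ⊕ Fin g) (Fin g ⊕ Fin g) (ZMod ℓ)) m := by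
    rw [hS', Units.val_mul]
    exact Fixes.mul (by intro a ha; exact hT₁fix a ha) hfix
  have hS'e₀ : ((S' : GL) : Matrix (Fin g ⊕ Fin g) (Fin g ⊕ Fin g) (ZMod ℓ)) *ᵥ eb a₀
      = eb a₀ := by
    rw [hS', Units.val_mul, ← mulVec_mulVec, ← hSm, hT₁v]
  -- move `S' f₀` to `f₀`
  set v' := ((S' : GL) : Matrix (Fin g ⊕ Fin g) (Fin g ⊕ Fin g) (ZMod ℓ)) *ᵥ fb a₀ with hv'
  have hPv' : Perp m v' := by
    intro a ha
    constructor
    · rw [hv', ← (hS'fix a ha).1, hS'sp.B_apply, B_fb, eb_apply_inl]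
      have hne : a ≠ a₀ := by
        intro h
        rw [ha₀] at h
        subst h
        simp at ha
      simp [hne]
    · rw [hv', ← (hS'fix a ha).2, hS'sp.B_apply, B_fb, fb_apply_inl]
  have hBe' : B (eb ⟨m, hm⟩) v' = 1 := by
    rw [hv', ← ha₀, ← hS'e₀, hS'sp.B_apply, B_fb, eb_apply_inl]
    simp
  obtain ⟨T₂, hT₂G, hT₂sp, hT₂fix, hT₂e, hT₂v⟩ := move_to_fb hT hm hPv' hBe'
  refine ⟨T₂ * T₁, mul_mem hT₂G hT₁G, ?_, ?_⟩
  · rw [Units.val_mul]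
    exact hT₂sp.mul hT₁sp
  · have hcomp : ((T₂ * T₁ * S : GL) : Matrix (Fin g ⊕ Fin g) (Fin g ⊕ Fin g) (ZMod ℓ))
        = (T₂ : Matrix (Fin g ⊕ Fin g) (Fin g ⊕ Fin g) (ZMod ℓ)) *
          ((S' : GL) : Matrix (Fin g ⊕ Fin g) (Fin g ⊕ Fin g) (ZMod ℓ)) := by
      rw [hS', mul_assoc, Units.val_mul]
    rw [hcomp]
    intro a ha
    rcases Nat.lt_succ_iff_lt_or_eq.mp ha with ha' | ha'
    · constructor
      · rw [← mulVec_mulVec, (hS'fix a ha').1, (hT₂fix a ha').1]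
      · rw [← mulVec_mulVec, (hS'fix a ha').2, (hT₂fix a ha').2]
    · have haa : a = a₀ := by
        rw [ha₀]
        exact Fin.ext ha'
      subst haa
      constructor
      · rw [← mulVec_mulVec, hS'e₀]
        exact hT₂e
      · rw [← mulVec_mulVec, ← hv']
        exact hT₂v

theorem sp_mem (hT : ∀ (w : Fin g ⊕ Fin g → ZMod ℓ) (c : ZMod ℓ), w ≠ 0 → Tunit w c ∈ G) :
    ∀ (t : ℕ) (S : GL), IsSp (S : Matrix (Fin g ⊕ Fin g) (Fin g ⊕ Fin g) (ZMod ℓ)) →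
      Fixes (S : Matrix (Fin g ⊕ Fin g) (Fin g ⊕ Fin g) (ZMod ℓ)) (g - t) → S ∈ G := by
  intro t
  induction t with
  | zero =>
    intro S hS hfix
    have hone : (S : Matrix (Fin g ⊕ Fin g) (Fin g ⊕ Fin g) (ZMod ℓ)) = 1 := by
      ext i j
      have hx : (S : Matrix (Fin g ⊕ Fin g) (Fin g ⊕ Fin g) (ZMod ℓ)) *ᵥ Pi.single j 1
          = Pi.single j 1 := by
        cases j with
        | inl a => exact (hfix a (by simpa using a.isLt)).1
        | inr a => exact (hfix a (by simpa using a.isLt)).2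
      have h2 := congrFun hx i
      rw [mulVec_single_one] at h2
      simp only [col_apply] at h2
      rw [h2, Pi.single_apply, one_apply]
    have : S = 1 := Units.ext (by rw [hone, Units.val_one])
    rw [this]
    exact one_mem G
  | succ t ih =>
    intro S hS hfix
    rcases Nat.lt_or_ge t g with h | h
    · have hm : g - (t + 1) < g := by omega
      obtain ⟨T, hTG, hTsp, hfix'⟩ := fixes_succ hT hm hS hfix
      have h1 : g - t = (g - (t + 1)) + 1 := by omega
      have hTS : T * S ∈ G := by
        apply ih
        · rw [Units.val_mul]
          exact hTsp.mul hS
        · rw [h1]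
          exact hfix'
      have hSrw : S = T⁻¹ * (T * S) := (inv_mul_cancel_left T S).symm
      rw [hSrw]
      exact mul_mem (inv_mem hTG) hTS
    · apply ih S hS
      rwa [show g - t = g - (t + 1) by omega]

end G

end SpAux


/-- Let `g ≥ 2` and let `ℓ` be an odd prime.  If `G` is a subgroup of `GSp_{2g}(F_ℓ)`
containing a transvection and acting irreducibly and primitively on `V = F_ℓ^{2g}`,
then `G` contains `Sp_{2g}(F_ℓ)`. -/
theorem contains_Sp_of_transvection_irreducible_primitive
    (g : ℕ) (hg : 2 ≤ g) (ℓ : ℕ) [Fact ℓ.Prime] (hodd : ℓ ≠ 2)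
    (G : Subgroup (Matrix (Fin g ⊕ Fin g) (Fin g ⊕ Fin g) (ZMod ℓ))ˣ)
    -- `G` consists of symplectic similitudes
    (hGSp : ∀ A ∈ G, ∃ γ : ZMod ℓ, γ ≠ 0 ∧
      (A : Matrix (Fin g ⊕ Fin g) (Fin g ⊕ Fin g) (ZMod ℓ))ᵀ * Jmat g (ZMod ℓ) * A
        = γ • Jmat g (ZMod ℓ))
    -- `G` contains a transvection
    (htrans : ∃ A ∈ G, (A : Matrix (Fin g ⊕ Fin g) (Fin g ⊕ Fin g) (ZMod ℓ)).det = 1 ∧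
      Module.finrank (ZMod ℓ)
        (LinearMap.ker (Matrix.toLin'
          ((A : Matrix (Fin g ⊕ Fin g) (Fin g ⊕ Fin g) (ZMod ℓ)) - 1))) = 2 * g - 1)
    -- the action of `G` on `V` is irreducible
    (hirr : ∀ W : Submodule (ZMod ℓ) (Fin g ⊕ Fin g → ZMod ℓ),
      (∀ A ∈ G, ∀ v ∈ W, (A : Matrix (Fin g ⊕ Fin g) (Fin g ⊕ Fin g) (ZMod ℓ)).mulVec v ∈ W) →
      W = ⊥ ∨ W = ⊤)
    -- the action of `G` on `V` is primitive
    (hprim : ¬ ∃ (r : ℕ) (_ : 2 ≤ r)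
      (W : Fin r → Submodule (ZMod ℓ) (Fin g ⊕ Fin g → ZMod ℓ)),
      (∀ i, W i ≠ ⊥) ∧ (⨆ i, W i) = ⊤ ∧
      (∀ i, W i ⊓ (⨆ j, ⨆ (_ : j ≠ i), W j) = ⊥) ∧
      (∀ A ∈ G, ∀ i, ∃ j,
        Submodule.map
          (Matrix.toLin' (A : Matrix (Fin g ⊕ Fin g) (Fin g ⊕ Fin g) (ZMod ℓ))) (W i) = W j)) :
    ∀ A : (Matrix (Fin g ⊕ Fin g) (Fin g ⊕ Fin g) (ZMod ℓ))ˣ,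
      (A : Matrix (Fin g ⊕ Fin g) (Fin g ⊕ Fin g) (ZMod ℓ))ᵀ * Jmat g (ZMod ℓ) * A
        = Jmat g (ZMod ℓ) → A ∈ G := by
  intro A hAsp
  have hl3 : 3 ≤ ℓ := by
    have := (Fact.out : ℓ.Prime).two_le
    omega
  have h2 : (2 : ZMod ℓ) ≠ 0 := by
    intro h
    have hd : ℓ ∣ 2 := (CharP.cast_eq_zero_iff (ZMod ℓ) ℓ 2).mp (by exact_mod_cast h)
    have := Nat.le_of_dvd two_pos hd
    omega
  obtain ⟨A₀, hA₀G, -, hker⟩ := htrans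
  have hne := SpAux.Rset_nonempty hg hGSp hA₀G hker
  have hspan := SpAux.span_Rset hGSp hirr hne
  have hconn := SpAux.Rset_conn hg hGSp hspan hprim
  have hT : ∀ (w : Fin g ⊕ Fin g → ZMod ℓ) (c : ZMod ℓ), w ≠ 0 → SpAux.Tunit w c ∈ G := by
    intro w c hw
    have hwR := SpAux.Rset_all hGSp hspan hl3 h2 hconn hw
    rcases eq_or_ne c 0 with rfl | hc
    · have hone : SpAux.Tunit w (0 : ZMod ℓ) = 1 :=
        Units.ext (by rw [SpAux.Tunit_val, SpAux.Tmat_zero, Units.val_one])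
      rw [hone]
      exact one_mem G
    · exact SpAux.Rset_param hwR hc
  exact SpAux.sp_mem hT g A hAsp (by
    intro a ha
    rw [Nat.sub_self] at ha
    exact absurd ha (Nat.not_lt_zero _))
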